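/- For all positive integers n and m, conjugation by the unitary R^{(n,m)} intertwines φ_{n,m} with the opposite comultiplication: R^{(n,m)} φ_{n,m}(x) (R^{(n,m)})^* = (τ_{m,n} ∘ φ_{m,n})(x) for all x ∈ M_{nm}(ℂ), where τ_{m,n} is the flip M_m(ℂ) ⊗ M_n(ℂ) → M_n(ℂ) ⊗ M_m(ℂ). -/

import Mathlib

/-- The index map `(i,j) ↦ m·i + j : Fin n × Fin m → Fin (n*m)` (0-based form of
`(i,j) ↦ m(i-1)+j`); its inverse is `k ↦ (k div m, k mod m)`. -/
def pairIdx {n m : ℕ} (i : Fin n) (j : Fin m) : Fin (n * m) :=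
  ⟨m * (i : ℕ) + (j : ℕ), by
    have hi : (i : ℕ) + 1 ≤ n := i.2
    have hj : (j : ℕ) < m := j.2
    have h1 : m * (i : ℕ) + (j : ℕ) < m * ((i : ℕ) + 1) := by
      rw [Nat.mul_succ]; omega
    have h2 : m * ((i : ℕ) + 1) ≤ m * n := Nat.mul_le_mul le_rfl hi
    have h3 : m * n = n * m := Nat.mul_comm m n
    omega⟩


/-- `φ : M_{nm}(ℂ) → M_n(ℂ) ⊗ M_m(ℂ)` (Kronecker model `Matrix (Fin n × Fin m)`)
is the matrix-unit isomorphism `φ_{n,m}` iff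
`φ(E^{(nm)}_{m(i-1)+j, m(i'-1)+j'}) = E^{(n)}_{i,i'} ⊗ E^{(m)}_{j,j'}`. -/
def IsMatrixUnitHom (n m : ℕ)
    (φ : Matrix (Fin (n * m)) (Fin (n * m)) ℂ →⋆ₐ[ℂ]
      Matrix (Fin n × Fin m) (Fin n × Fin m) ℂ) : Prop :=
  ∀ (i i' : Fin n) (j j' : Fin m),
    φ (Matrix.single (pairIdx i j) (pairIdx i' j') 1) =
      Matrix.single (i, j) (i', j') 1

/-- The permutation unitary `R^{(n,m)} ∈ M_n(ℂ) ⊗ M_m(ℂ)` (Kronecker model):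
`R^{(n,m)} e_i ⊗ e_j = e_{i'} ⊗ e_{j'}` where `m·i + j = n·j' + i'` (0-based),
i.e. the `(p,q)` entry is `1` iff `p = σ_{n,m}(q)`. -/
def Rmat (n m : ℕ) : Matrix (Fin n × Fin m) (Fin n × Fin m) ℂ :=
  fun p q => if m * (q.1 : ℕ) + (q.2 : ℕ) = n * (p.2 : ℕ) + (p.1 : ℕ) then 1 else 0

lemma pairIdx_eq_equiv {n m : ℕ} (i : Fin n) (j : Fin m) :
    pairIdx i j = finProdFinEquiv (i, j) := by
  apply Fin.ext
  simp [pairIdx, finProdFinEquiv]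
  ring

lemma pairIdx_pair {n m : ℕ} (p : Fin n × Fin m) :
    pairIdx p.1 p.2 = finProdFinEquiv p := by
  rw [pairIdx_eq_equiv]

lemma apply_divNat_modNat {n m : ℕ} (k : Fin (n * m)) :
    finProdFinEquiv (k.divNat, k.modNat) = k := by
  simpa using finProdFinEquiv.apply_symm_apply k

lemma pairIdx_val {n m : ℕ} (i : Fin n) (j : Fin m) :
    (pairIdx i j : ℕ) = m * (i : ℕ) + (j : ℕ) := rfl

lemma hom_apply {n m : ℕ}
    (φ : Matrix (Fin (n * m)) (Fin (n * m)) ℂ →⋆ₐ[ℂ]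
      Matrix (Fin n × Fin m) (Fin n × Fin m) ℂ)
    (hφ : IsMatrixUnitHom n m φ) (x : Matrix (Fin (n * m)) (Fin (n * m)) ℂ)
    (p q : Fin n × Fin m) :
    φ x p q = x (finProdFinEquiv p) (finProdFinEquiv q) := by
  have key : ∀ k l : Fin (n * m), φ (Matrix.single k l 1) =
      Matrix.single (finProdFinEquiv.symm k) (finProdFinEquiv.symm l) 1 := by
    intro k l
    obtain ⟨a, rfl⟩ : ∃ a, finProdFinEquiv a = k := ⟨finProdFinEquiv.symm k, Equiv.apply_symm_apply _ _⟩
    obtain ⟨b, rfl⟩ : ∃ b, finProdFinEquiv b = l := ⟨finProdFinEquiv.symm l, Equiv.apply_symm_apply _ _⟩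
    rw [Equiv.symm_apply_apply, Equiv.symm_apply_apply, ← pairIdx_pair, ← pairIdx_pair]
    exact hφ a.1 b.1 a.2 b.2
  have h1 : ∀ k l : Fin (n * m), Matrix.single k l (x k l)
      = x k l • Matrix.single k l 1 := by
    intro k l; rw [Matrix.smul_single]; simp
  conv_lhs => rw [Matrix.matrix_eq_sum_single x]
  simp only [h1, map_sum, map_smul, key]
  simp only [Matrix.sum_apply, Matrix.smul_apply, Matrix.single, Matrix.of_apply,
    Equiv.symm_apply_eq, smul_eq_mul, mul_ite, mul_one, mul_zero, ite_and,
    Finset.sum_ite_eq', Finset.mem_univ, if_true]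
  rw [Finset.sum_eq_single (finProdFinEquiv p) (fun b _ hb => by simp [hb]) (by simp)]
  simp [Finset.sum_ite_eq']

/-- index `n * p.2 + p.1` as element of `Fin (n*m)` -/
def colIdx (n m : ℕ) (p : Fin n × Fin m) : Fin (n * m) :=
  finCongr (mul_comm m n) (finProdFinEquiv (p.2, p.1))

lemma colIdx_val (n m : ℕ) (p : Fin n × Fin m) :
    (colIdx n m p : ℕ) = n * (p.2 : ℕ) + (p.1 : ℕ) := by
  simp [colIdx, finProdFinEquiv]; ring

lemma Rmat_apply (n m : ℕ) (p q : Fin n × Fin m) :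
    Rmat n m p q = if q = finProdFinEquiv.symm (colIdx n m p) then 1 else 0 := by
  unfold Rmat
  congr 1
  rw [eq_iff_iff, Equiv.eq_symm_apply, Fin.ext_iff, colIdx_val, ← pairIdx_pair, pairIdx_val]

theorem Rmat_conj_intertwines (n m : ℕ) (hn : 0 < n) (hm : 0 < m)
    (φnm : Matrix (Fin (n * m)) (Fin (n * m)) ℂ →⋆ₐ[ℂ]
      Matrix (Fin n × Fin m) (Fin n × Fin m) ℂ)
    (hφnm : IsMatrixUnitHom n m φnm)
    (φmn : Matrix (Fin (m * n)) (Fin (m * n)) ℂ →⋆ₐ[ℂ]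
      Matrix (Fin m × Fin n) (Fin m × Fin n) ℂ)
    (hφmn : IsMatrixUnitHom m n φmn) :
    ∀ x : Matrix (Fin (n * m)) (Fin (n * m)) ℂ,
      Rmat n m * φnm x * star (Rmat n m) =
        Matrix.reindex (Equiv.prodComm (Fin m) (Fin n)) (Equiv.prodComm (Fin m) (Fin n))
          (φmn (Matrix.reindex (finCongr (mul_comm n m)) (finCongr (mul_comm n m)) x)) := by
  intro x
  ext p q
  have lhs : (Rmat n m * φnm x * star (Rmat n m)) p q = x (colIdx n m p) (colIdx n m q) := by
    rw [Matrix.mul_apply]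
    have hcol : ∀ t, (Rmat n m * φnm x) p t * (star (Rmat n m)) t q =
        if t = finProdFinEquiv.symm (colIdx n m q) then (Rmat n m * φnm x) p t else 0 := by
      intro t
      rw [Matrix.star_apply, Rmat_apply]
      split <;> simp
    rw [Finset.sum_congr rfl (fun t _ => hcol t), Finset.sum_ite_eq' ]
    simp only [Finset.mem_univ, if_true]
    rw [Matrix.mul_apply]
    have hrow : ∀ s, Rmat n m p s * φnm x s (finProdFinEquiv.symm (colIdx n m q)) =
        if s = finProdFinEquiv.symm (colIdx n m p) then
          φnm x s (finProdFinEquiv.symm (colIdx n m q)) else 0 := by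
      intro s
      rw [Rmat_apply]
      split <;> simp
    rw [Finset.sum_congr rfl (fun s _ => hrow s), Finset.sum_ite_eq']
    simp [hom_apply φnm hφnm, apply_divNat_modNat]
  rw [lhs]
  rw [Matrix.reindex_apply, Matrix.submatrix_apply]
  rw [hom_apply φmn hφmn]
  simp only [Matrix.reindex_apply, Matrix.submatrix_apply]
  congr 1
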